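/- Let q = p^l with p prime, let h divide l with p^h ≥ 4 if p = 2 and p^h ≥ 5 otherwise, and assume p^h + 1 divides q − 1. Let z, t be integers with 0 ≤ t < z ≤ ⌊p^h/2⌋ − 1 and 2t ≥ max{0, 4z − p^h − 1}. Let n' ≥ 2 and a be integers satisfying one of: (1) n' | q−1 and a = z; (2) n'−1 | q−1 and a = z; (3) n'−1 | q−1, a = t, and, if p is odd, gcd(n', p^h) ≠ 1 or gcd(n', p^h+1) ≠ 1. Then there exists a linear code over F_{p^h} with parameters [(p^h+1)n', (n'−1)(2z+1)+2a+1, p^h+1−2a]_{p^h} that is an optimal (r,δ)-LRC with (r,δ) = (2z+1, p^h−2z+1). -/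

import Mathlib

/-- The code `C ⊆ F^ι` has minimum Hamming distance exactly `d`. -/
def HasMinDist {F ι : Type*} [Field F] [DecidableEq F] [Fintype ι]
    (C : Submodule F (ι → F)) (d : ℕ) : Prop :=
  (∀ c ∈ C, c ≠ 0 → d ≤ hammingNorm c) ∧ ∃ c ∈ C, c ≠ 0 ∧ hammingNorm c = d

/-- The code `C ⊆ F^ι` is an `(r, δ)`-locally recoverable code: every coordinate `i` lies in a
set `R̄` of at most `r + δ - 1` coordinates such that the punctured code `C[R̄]` has minimum
Hamming distance at least `δ`. -/
def IsLRC {F ι : Type*} [Field F] [DecidableEq F] [DecidableEq ι] [Fintype ι]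
    (C : Submodule F (ι → F)) (r δ : ℕ) : Prop :=
  ∀ i : ι, ∃ R : Finset ι, i ∈ R ∧ R.card ≤ r + δ - 1 ∧
    ∀ c ∈ C, (∃ j ∈ R, c j ≠ 0) → δ ≤ (R.filter fun j => c j ≠ 0).card

/-- There exists a linear code over `F` of length `n`, dimension `k` and minimum distance `d`
which is an optimal `(r, δ)`-LRC, i.e. attaining the Singleton-like bound
`k + d + (⌈k/r⌉ - 1)(δ - 1) = n + 1`. -/
def IsOptimalLRCParams (F : Type*) [Field F] [DecidableEq F] (n k d r δ : ℕ) : Prop :=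
  ∃ C : Submodule F (Fin n → F),
    Module.finrank F C = k ∧ HasMinDist C d ∧ IsLRC C r δ ∧
      k + d + ((k + r - 1) / r - 1) * (δ - 1) = n + 1

open Polynomial Finset

section Aux

variable {K : Type*} [Field K] [Fintype K] [DecidableEq K]

lemma hammingNorm_eq_card_filter {ι : Type*} [Fintype ι] (x : ι → K) :
    hammingNorm x = (Finset.univ.filter fun i => x i ≠ 0).card := by
  simp [hammingNorm]

/-- Singleton-type bound: a subspace of dimension `> k` contains a nonzero vector of
weight `≤ N - k`. -/
lemma exists_low_weight {N k : ℕ} (W : Submodule K (Fin N → K))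
    (hk : k + 1 ≤ Module.finrank K W) (hkN : k ≤ N) :
    ∃ c ∈ W, c ≠ 0 ∧ hammingNorm c ≤ N - k := by
  obtain ⟨T, -, hT⟩ := Finset.exists_subset_card_eq (s := (Finset.univ : Finset (Fin N)))
    (n := k) (by simpa using hkN)
  let π : W →ₗ[K] ({ i // i ∈ T } → K) :=
    (LinearMap.funLeft K K (fun i : { i // i ∈ T } => (i : Fin N))).comp W.subtype
  have hni : ¬ Function.Injective π := by
    intro hinj
    have h1 := LinearMap.finrank_le_finrank_of_injective hinj
    rw [Module.finrank_pi] at h1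
    have h2 : Fintype.card { i // i ∈ T } = k := by rw [Fintype.card_coe, hT]
    omega
  have hker : LinearMap.ker π ≠ ⊥ := fun hbot => hni (LinearMap.ker_eq_bot.mp hbot)
  obtain ⟨w, hwker, hw0⟩ := Submodule.exists_mem_ne_zero_of_ne_bot hker
  refine ⟨(w : Fin N → K), w.2, by simpa using hw0, ?_⟩
  have hz : ∀ i ∈ T, (w : Fin N → K) i = 0 := by
    intro i hi
    have := LinearMap.mem_ker.mp hwker
    have := congrFun this ⟨i, hi⟩
    simpa [π, LinearMap.funLeft] using this
  rw [hammingNorm_eq_card_filter]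
  have hsub : (Finset.univ.filter fun i => (w : Fin N → K) i ≠ 0) ⊆ Tᶜ := by
    intro i hi
    rw [Finset.mem_compl]
    intro hiT
    exact (Finset.mem_filter.mp hi).2 (hz i hiT)
  calc (Finset.univ.filter fun i => (w : Fin N → K) i ≠ 0).card ≤ Tᶜ.card :=
        Finset.card_le_card hsub
    _ = N - k := by rw [Finset.card_compl, hT]; simp

variable {L : Type*} [Field L] [Algebra K L]

/-- The cyclic-type code of designed dimension `2m+1` and length `q+1` cut out by the
parity checks at `γ^j`, `j ∈ [m+1, q-m]`. -/
def lrcCode (γ : L) (q m : ℕ) : Submodule K (Fin (q + 1) → K) where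
  carrier := {c | ∀ j ∈ Finset.Icc (m + 1) (q - m),
    ∑ i : Fin (q + 1), algebraMap K L (c i) * γ ^ ((i : ℕ) * j) = 0}
  add_mem' := by
    intro c d hc hd j hj
    have h1 := hc j hj
    have h2 := hd j hj
    simp only [Pi.add_apply, map_add, add_mul, Finset.sum_add_distrib]
    rw [h1, h2, add_zero]
  zero_mem' := by
    intro j hj
    simp
  smul_mem' := by
    intro k c hc j hj
    have h1 := hc j hj
    simp only [Pi.smul_apply, smul_eq_mul, map_mul, mul_assoc, ← Finset.mul_sum]
    rw [h1, mul_zero]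

lemma lrcCode_mono (γ : L) (q : ℕ) {m m' : ℕ} (hmm : m ≤ m') :
    (lrcCode γ q m : Submodule K (Fin (q + 1) → K)) ≤ lrcCode γ q m' := by
  intro c hc j hj
  apply hc
  rw [Finset.mem_Icc] at hj ⊢
  omega

lemma mem_lrcCode_iff (γ : L) (q m : ℕ) (c : Fin (q + 1) → K) :
    c ∈ (lrcCode γ q m : Submodule K (Fin (q + 1) → K)) ↔
      ∀ j ∈ Finset.Icc (m + 1) (q - m),
        ∑ i : Fin (q + 1), algebraMap K L (c i) * γ ^ ((i : ℕ) * j) = 0 := Iff.rfl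

/-- BCH-type bound: any nonzero codeword has weight at least `q + 1 - 2m`. -/
lemma lrcCode_dist {γ : L} {q m : ℕ} (hγ : IsPrimitiveRoot γ (q + 1)) (hm : 2 * m + 1 ≤ q)
    {c : Fin (q + 1) → K} (hc : c ∈ (lrcCode γ q m : Submodule K (Fin (q + 1) → K)))
    (h0 : c ≠ 0) : q + 1 - 2 * m ≤ hammingNorm c := by
  by_contra hlt
  push_neg at hlt
  set T : Finset (Fin (q + 1)) := Finset.univ.filter fun i => c i ≠ 0 with hT
  have hceq : hammingNorm c = T.card := hammingNorm_eq_card_filter c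
  have hTcard : T.card ≤ q - 2 * m := by omega
  set N := T.card with hN
  let e : Fin N ≃ (T : Finset (Fin (q + 1))) := T.equivFin.symm
  set node : Fin N → L := fun i' => γ ^ (((e i' : Fin (q + 1)) : ℕ)) with hnode
  have hnodeinj : Function.Injective node := by
    intro i' j' hij
    have h1 : (((e i' : Fin (q + 1)) : ℕ)) = (((e j' : Fin (q + 1)) : ℕ)) :=
      hγ.pow_inj (Fin.is_lt _) (Fin.is_lt _) hij
    have h2 : (e i' : Fin (q + 1)) = (e j' : Fin (q + 1)) := Fin.ext h1
    exact e.injective (Subtype.ext h2)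
  set v : Fin N → L := fun i' =>
    algebraMap K L (c (e i')) * γ ^ ((((e i' : Fin (q + 1)) : ℕ)) * (m + 1)) with hv
  have hsys : ∀ j'' : Fin N, ((Matrix.vandermonde node).transpose).mulVec v j'' = 0 := by
    intro j''
    have hjmem : m + 1 + (j'' : ℕ) ∈ Finset.Icc (m + 1) (q - m) := by
      rw [Finset.mem_Icc]
      have := j''.is_lt
      omega
    have hch := hc _ hjmem
    have hres : ∑ i ∈ T, algebraMap K L (c i) * γ ^ ((i : ℕ) * (m + 1 + (j'' : ℕ))) = 0 := by
      rw [← hch]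
      apply Finset.sum_subset (Finset.subset_univ T)
      intro i _ hiT
      have : c i = 0 := by
        by_contra hne
        exact hiT (Finset.mem_filter.mpr ⟨Finset.mem_univ i, hne⟩)
      rw [this, map_zero, zero_mul]
    have hres2 : ∑ i' : Fin N, algebraMap K L (c (e i')) *
        γ ^ ((((e i' : Fin (q + 1)) : ℕ)) * (m + 1 + (j'' : ℕ))) = 0 := by
      rw [← hres, ← Finset.sum_coe_sort T
        (fun i => algebraMap K L (c i) * γ ^ ((i : ℕ) * (m + 1 + (j'' : ℕ))))]
      exact Equiv.sum_comp e fun x : { x // x ∈ T } =>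
        algebraMap K L (c x) * γ ^ (((x : Fin (q + 1)) : ℕ) * (m + 1 + (j'' : ℕ)))
    rw [Matrix.mulVec]
    dsimp [dotProduct]
    rw [← hres2]
    apply Finset.sum_congr rfl
    intro i' _
    simp only [Matrix.transpose_apply, Matrix.vandermonde_apply, hv, hnode]
    rw [← pow_mul, mul_left_comm, ← pow_add]
    congr 2
    ring
  have hdet : ((Matrix.vandermonde node).transpose).det ≠ 0 := by
    rw [Matrix.det_transpose]
    exact Matrix.det_vandermonde_ne_zero_iff.mpr hnodeinj
  have hv0 : v = 0 := Matrix.eq_zero_of_mulVec_eq_zero hdet (funext hsys)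
  obtain ⟨i0, hi0⟩ : ∃ i0, c i0 ≠ 0 := by
    by_contra hall
    push_neg at hall
    exact h0 (funext hall)
  have hi0T : i0 ∈ T := Finset.mem_filter.mpr ⟨Finset.mem_univ i0, hi0⟩
  set i' := T.equivFin ⟨i0, hi0T⟩ with hi'
  have hei : (e i' : Fin (q + 1)) = i0 := by
    rw [hi']
    simp [e]
  have hvi' : algebraMap K L (c i0) * γ ^ ((i0 : ℕ) * (m + 1)) = 0 := by
    have hcf := congrFun hv0 i'
    simp only [hv, Pi.zero_apply] at hcf
    rwa [hei] at hcf
  rcases mul_eq_zero.mp hvi' with h | h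
  · exact hi0 (((_root_.map_eq_zero (algebraMap K L)).mp h))
  · exact pow_ne_zero _ (hγ.ne_zero (by omega)) h

lemma pow_card_fixed_mem_range {x : L} (hx : x ^ Fintype.card K = x) :
    x ∈ Set.range (algebraMap K L) := by
  classical
  set q := Fintype.card K with hqdef
  have hq : 1 < q := Fintype.one_lt_card
  set P : L[X] := X ^ q - X with hP
  have hP0 : P ≠ 0 := FiniteField.X_pow_card_sub_X_ne_zero L hq
  have hdeg : P.natDegree = q := FiniteField.X_pow_card_sub_X_natDegree_eq L hq
  set S : Finset L := (Finset.univ : Finset K).image (algebraMap K L) with hS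
  have hcard : S.card = q := by
    rw [hS, Finset.card_image_of_injective _ (algebraMap K L).injective, Finset.card_univ]
  have hroot : ∀ y ∈ insert x S, y ∈ P.roots.toFinset := by
    intro y hy
    rw [Multiset.mem_toFinset, mem_roots hP0]
    rcases Finset.mem_insert.mp hy with rfl | hy
    · simp [hP, IsRoot, hx]
    · obtain ⟨α, -, rfl⟩ := Finset.mem_image.mp hy
      simp only [hP, IsRoot, eval_sub, eval_pow, eval_X, ← map_pow]
      rw [FiniteField.pow_card, sub_self]
  by_contra hxr
  have hx_not : x ∉ S := by
    intro hmem
    obtain ⟨α, -, rfl⟩ := Finset.mem_image.mp hmem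
    exact hxr ⟨α, rfl⟩
  have h1 : (insert x S).card = q + 1 := by rw [Finset.card_insert_of_notMem hx_not, hcard]
  have h2 : (insert x S).card ≤ P.roots.toFinset.card :=
    Finset.card_le_card fun y hy => hroot y hy
  have h3 : P.roots.toFinset.card ≤ Multiset.card P.roots := Multiset.toFinset_card_le _
  have h4 : Multiset.card P.roots ≤ q := by
    have := P.card_roots'
    omega
  omega

lemma exists_gK (p hh : ℕ) (hp : p.Prime) [CharP L p] (hq : Fintype.card K = p ^ hh)
    {γ : L} (hγ : IsPrimitiveRoot γ (p ^ hh + 1)) (m : ℕ) (hm : m ≤ p ^ hh) :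
    ∃ gK : K[X], gK.map (algebraMap K L) =
      ∏ j ∈ Finset.Icc (m + 1) (p ^ hh - m), (X - C (γ ^ j)) := by
  set q := p ^ hh with hqdef
  set g : L[X] := ∏ j ∈ Finset.Icc (m + 1) (q - m), (X - C (γ ^ j)) with hg
  haveI : Fact p.Prime := ⟨hp⟩
  have hγ0 : γ ≠ 0 := hγ.ne_zero (by omega)
  have hγ1 : γ ^ (q + 1) = 1 := hγ.pow_eq_one
  have hpow : ∀ j, j ≤ q + 1 → (γ ^ j) ^ q = γ ^ (q + 1 - j) := by
    intro j hj
    apply mul_right_cancel₀ (pow_ne_zero j hγ0)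
    rw [← pow_mul, ← pow_add, ← pow_add]
    have h1 : j * q + j = (q + 1) * j := by ring
    have h2 : q + 1 - j + j = q + 1 := by omega
    rw [h1, h2, pow_mul, hγ1, one_pow]
  have hfix : g.map (iterateFrobenius L p hh) = g := by
    rw [hg, Polynomial.map_prod]
    simp only [Polynomial.map_sub, Polynomial.map_X, Polynomial.map_C, iterateFrobenius_def]
    refine Finset.prod_nbij' (fun j => q + 1 - j) (fun j => q + 1 - j) ?_ ?_ ?_ ?_ ?_
    · intro j hjm
      rw [Finset.mem_Icc] at hjm ⊢
      omega
    · intro j hjm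
      rw [Finset.mem_Icc] at hjm ⊢
      omega
    · intro j hjm
      rw [Finset.mem_Icc] at hjm
      omega
    · intro j hjm
      rw [Finset.mem_Icc] at hjm
      omega
    · intro j hjm
      rw [Finset.mem_Icc] at hjm
      have hpj : (γ ^ j) ^ (p ^ hh) = γ ^ (q + 1 - j) := hpow j (by omega)
      rw [hpj]
  have hcoeff : ∀ n : ℕ, g.coeff n ∈ Set.range (algebraMap K L) := by
    intro n
    apply pow_card_fixed_mem_range
    have hc := congrArg (fun P : L[X] => P.coeff n) hfix
    simpa [Polynomial.coeff_map, iterateFrobenius_def, hq] using hc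
  obtain ⟨gK, hgK⟩ := (Polynomial.mem_lifts _).mp
    ((Polynomial.lifts_iff_coeff_lifts _).mpr hcoeff)
  exact ⟨gK, hgK⟩

lemma lrcCode_finrank (p hh : ℕ) (hp : p.Prime) [CharP L p] (hq : Fintype.card K = p ^ hh)
    {γ : L} (hγ : IsPrimitiveRoot γ (p ^ hh + 1)) (m : ℕ) (hm : 2 * m + 2 ≤ p ^ hh) :
    Module.finrank K (lrcCode γ (p ^ hh) m : Submodule K (Fin (p ^ hh + 1) → K)) = 2 * m + 1 := by
  set q := p ^ hh with hqdef
  obtain ⟨gK, hgK⟩ := exists_gK (K := K) p hh hp hq hγ m (by omega)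
  set g : L[X] := ∏ j ∈ Finset.Icc (m + 1) (q - m), (X - C (γ ^ j)) with hg
  have hgmonic : g.Monic := monic_prod_of_monic _ _ fun j _ => monic_X_sub_C _
  have hgdeg : g.natDegree = q - 2 * m := by
    rw [hg, natDegree_prod _ _ fun j _ => X_sub_C_ne_zero (γ ^ j)]
    simp only [natDegree_X_sub_C]
    rw [Finset.sum_const, Nat.card_Icc, smul_eq_mul, mul_one]
    omega
  have hgK0 : gK ≠ 0 := by
    intro h0
    rw [h0, Polynomial.map_zero] at hgK
    exact hgmonic.ne_zero hgK.symm
  have hgKdeg : gK.natDegree = q - 2 * m := by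
    have := Polynomial.natDegree_map (p := gK) (algebraMap K L)
    rw [hgK] at this
    omega
  set Φ : (Fin (2 * m + 1) → K) →ₗ[K] (Fin (q + 1) → K) :=
    { toFun := fun lam => fun i =>
        ((∑ v : Fin (2 * m + 1), C (lam v) * X ^ (v : ℕ)) * gK).coeff (i : ℕ)
      map_add' := by
        intro x y
        funext i
        simp only [Pi.add_apply, C_add, add_mul, Finset.sum_add_distrib, coeff_add]
      map_smul' := by
        intro r x
        funext i
        simp only [Pi.smul_apply, smul_eq_mul, C_mul, mul_assoc, ← Finset.mul_sum,
          coeff_C_mul, RingHom.id_apply] } with hΦ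
  have hdegsum : ∀ lam : Fin (2 * m + 1) → K,
      ((∑ v : Fin (2 * m + 1), C (lam v) * X ^ (v : ℕ)) * gK).natDegree ≤ q := by
    intro lam
    refine le_trans (natDegree_mul_le) ?_
    have h1 : (∑ v : Fin (2 * m + 1), C (lam v) * X ^ (v : ℕ)).natDegree ≤ 2 * m := by
      apply Polynomial.natDegree_sum_le_of_forall_le
      intro v _
      exact le_trans (natDegree_C_mul_X_pow_le _ _) (by omega)
    omega
  have hΦinj : Function.Injective Φ := by
    rw [← LinearMap.ker_eq_bot]
    rw [LinearMap.ker_eq_bot']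
    intro lam hlam
    set f : K[X] := ∑ v : Fin (2 * m + 1), C (lam v) * X ^ (v : ℕ) with hf
    have hP0 : f * gK = 0 := by
      apply Polynomial.ext
      intro n
      by_cases hn : n < q + 1
      · have := congrFun hlam ⟨n, hn⟩
        simpa [hΦ] using this
      · rw [coeff_eq_zero_of_natDegree_lt (lt_of_le_of_lt (hdegsum lam) (by omega))]
        simp
    have hf0 : f = 0 := by
      rcases mul_eq_zero.mp hP0 with h | h
      · exact h
      · exact absurd h hgK0
    funext v
    have hcoeffv : f.coeff (v : ℕ) = lam v := by
      rw [hf, finset_sum_coeff]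
      rw [Finset.sum_eq_single v]
      · simp
      · intro u _ huv
        rw [coeff_C_mul, coeff_X_pow]
        have : ¬ ((v : ℕ) = (u : ℕ)) := fun hc => huv (Fin.ext hc.symm)
        simp [this]
      · intro hv
        exact absurd (Finset.mem_univ v) hv
    rw [hf0] at hcoeffv
    simpa using hcoeffv.symm
  have hmem : ∀ lam, Φ lam ∈ (lrcCode γ q m : Submodule K (Fin (q + 1) → K)) := by
    intro lam j hj
    set P : K[X] := (∑ v : Fin (2 * m + 1), C (lam v) * X ^ (v : ℕ)) * gK with hP
    have hdegP : (P.map (algebraMap K L)).natDegree < q + 1 := by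
      rw [Polynomial.natDegree_map]
      exact lt_of_le_of_lt (hdegsum lam) (by omega)
    have heval : ∑ i : Fin (q + 1), algebraMap K L (P.coeff (i : ℕ)) * (γ ^ j) ^ (i : ℕ) =
        (P.map (algebraMap K L)).eval (γ ^ j) := by
      rw [Polynomial.eval_eq_sum_range' hdegP, ← Fin.sum_univ_eq_sum_range]
      apply Finset.sum_congr rfl
      intro i _
      rw [Polynomial.coeff_map]
    have hzero : (P.map (algebraMap K L)).eval (γ ^ j) = 0 := by
      rw [hP, Polynomial.map_mul, hgK, eval_mul, hg, eval_prod]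
      have : Polynomial.eval (γ ^ j) (X - C (γ ^ j)) = 0 := by simp
      rw [Finset.prod_eq_zero hj this, mul_zero]
    have hgoal : ∑ i : Fin (q + 1), algebraMap K L ((Φ lam) i) * γ ^ ((i : ℕ) * j) = 0 := by
      rw [← hzero, ← heval]
      apply Finset.sum_congr rfl
      intro i _
      congr 1
      rw [← pow_mul, mul_comm j (i : ℕ)]
    exact hgoal
  have hrange : LinearMap.range Φ ≤ (lrcCode γ q m : Submodule K (Fin (q + 1) → K)) := by
    rintro x ⟨lam, rfl⟩
    exact hmem lam
  have hlower : 2 * m + 1 ≤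
      Module.finrank K (lrcCode γ q m : Submodule K (Fin (q + 1) → K)) := by
    have h1 := Submodule.finrank_mono hrange
    rw [LinearMap.finrank_range_of_inj hΦinj, Module.finrank_pi, Fintype.card_fin] at h1
    exact h1
  have hupper : Module.finrank K (lrcCode γ q m : Submodule K (Fin (q + 1) → K)) ≤
      2 * m + 1 := by
    by_contra hcon
    push_neg at hcon
    have hfr : (2 * m + 1) + 1 ≤
        Module.finrank K (lrcCode γ q m : Submodule K (Fin (q + 1) → K)) := by omega
    obtain ⟨c, hc, hc0, hw⟩ := exists_low_weight _ hfr (by omega)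
    have hd := lrcCode_dist hγ (by omega) hc hc0
    omega
  omega

lemma hammingNorm_comp_equiv {ι κ : Type*} [Fintype ι] [Fintype κ] (e : ι ≃ κ) (x : κ → K) :
    hammingNorm (x ∘ e) = hammingNorm x := by
  rw [hammingNorm_eq_card_filter, hammingNorm_eq_card_filter]
  refine Finset.card_nbij' e e.symm ?_ ?_ ?_ ?_ <;> intro a ha <;>
    simp only [Finset.mem_coe, Finset.mem_filter, Finset.mem_univ, true_and, Function.comp_apply] at ha ⊢ <;>
    simp [ha]

lemma hammingNorm_prod {ι κ : Type*} [Fintype ι] [Fintype κ] [DecidableEq κ] (x : ι × κ → K) :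
    hammingNorm x = ∑ b : κ, hammingNorm fun i => x (i, b) := by
  rw [hammingNorm_eq_card_filter]
  rw [Finset.card_eq_sum_card_fiberwise (f := Prod.snd) (t := Finset.univ)
    (fun _ _ => Finset.mem_univ _)]
  apply Finset.sum_congr rfl
  intro b _
  rw [hammingNorm_eq_card_filter]
  refine Finset.card_nbij' (fun p => p.1) (fun i => (i, b)) ?_ ?_ ?_ ?_
  · intro q hq
    simp only [Finset.mem_coe, Finset.mem_filter, Finset.mem_univ, true_and] at hq ⊢
    obtain ⟨hne, hsnd⟩ := hq
    have hqq : (q.1, b) = q := Prod.ext rfl hsnd.symm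
    rw [hqq]
    exact hne
  · intro i hi
    simp only [Finset.mem_coe, Finset.mem_filter, Finset.mem_univ, true_and] at hi ⊢
    exact ⟨hi, trivial⟩
  · intro q hq
    simp only [Finset.mem_coe, Finset.mem_filter, Finset.mem_univ, true_and] at hq
    exact Prod.ext rfl hq.2.symm
  · intro i _
    rfl

end Aux

set_option maxHeartbeats 1000000 in
set_option synthInstance.maxHeartbeats 400000 in
theorem new_optimal_lrc_bivariate_ph_plus_one
    {K : Type*} [Field K] [Fintype K] [DecidableEq K]
    (p l h : ℕ) (hp : p.Prime) (hhl : h ∣ l) (hK : Fintype.card K = p ^ h)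
    (hph2 : p = 2 → 4 ≤ p ^ h) (hphodd : p ≠ 2 → 5 ≤ p ^ h)
    (hdiv : p ^ h + 1 ∣ p ^ l - 1)
    (z t : ℕ) (htz : t < z) (hz : z ≤ p ^ h / 2 - 1) (ht : 4 * z - (p ^ h + 1) ≤ 2 * t)
    (n' a : ℕ) (hn' : 2 ≤ n')
    (hcase :
      (n' ∣ p ^ l - 1 ∧ a = z) ∨
      (n' - 1 ∣ p ^ l - 1 ∧ a = z) ∨
      (n' - 1 ∣ p ^ l - 1 ∧ a = t ∧
        (Odd p → Nat.gcd n' (p ^ h) ≠ 1 ∨ Nat.gcd n' (p ^ h + 1) ≠ 1))) :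
    IsOptimalLRCParams K ((p ^ h + 1) * n') ((n' - 1) * (2 * z + 1) + 2 * a + 1)
      (p ^ h + 1 - 2 * a) (2 * z + 1) (p ^ h - 2 * z + 1) := by
  classical
  obtain ⟨n'', rfl⟩ : ∃ m, n' = m + 2 := ⟨n' - 2, by omega⟩
  have hq4 : 4 ≤ p ^ h := by
    by_cases hp2 : p = 2
    · exact hph2 hp2
    · exact le_trans (by norm_num) (hphodd hp2)
  have hh0 : h ≠ 0 := by
    intro h0
    rw [h0, pow_zero] at hq4
    omega
  have ha : a ≤ z := by
    rcases hcase with ⟨-, rfl⟩ | ⟨-, rfl⟩ | ⟨-, rfl, -⟩ <;> omega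
  have hz2 : 2 * z + 2 ≤ p ^ h := by omega
  have ha2 : 2 * a + 2 ≤ p ^ h := by omega
  have hkey : p ^ h + 1 - 2 * a ≤ (p ^ h + 1 - 2 * z) + (p ^ h + 1 - 2 * z) := by
    rcases hcase with ⟨-, rfl⟩ | ⟨-, rfl⟩ | ⟨-, rfl, -⟩ <;> omega
  haveI hchK : CharP K p := by
    haveI := ringChar.charP K
    obtain ⟨n, hpr, hcard⟩ := FiniteField.card K (ringChar K)
    have hdvd : p ∣ ringChar K ^ (n : ℕ) := by
      rw [← hcard, hK]
      exact dvd_pow_self p hh0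
    have hpd : p ∣ ringChar K := hp.dvd_of_dvd_pow hdvd
    have hpe : p = ringChar K := (Nat.prime_dvd_prime_iff_eq hp hpr).mp hpd
    rw [hpe]
    exact ringChar.charP K
  set L := AlgebraicClosure K with hL
  haveI : CharP L p := charP_of_injective_algebraMap (algebraMap K L).injective p
  haveI : NeZero ((p ^ h + 1 : ℕ) : L) := by
    constructor
    rw [Ne, CharP.cast_eq_zero_iff L p]
    intro hdvd
    have h1 : p ∣ p ^ h := dvd_pow_self p hh0
    have h2 : p ∣ (p ^ h + 1) - p ^ h := Nat.dvd_sub hdvd h1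
    have h3 : (p ^ h + 1) - p ^ h = 1 := by omega
    rw [h3] at h2
    have h4 : p = 1 := Nat.dvd_one.mp h2
    have h5 := hp.two_le
    omega
  obtain ⟨γ, hγ⟩ := HasEnoughRootsOfUnity.exists_primitiveRoot L (p ^ h + 1)
  set A : Submodule K (Fin (p ^ h + 1) → K) := lrcCode γ (p ^ h) z with hA
  set A' : Submodule K (Fin (p ^ h + 1) → K) := lrcCode γ (p ^ h) a with hA'def
  have hfinA : Module.finrank K A = 2 * z + 1 := lrcCode_finrank p h hp hK hγ z hz2
  have hfinA' : Module.finrank K A' = 2 * a + 1 := lrcCode_finrank p h hp hK hγ a ha2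
  have hA'A : A' ≤ A := lrcCode_mono γ (p ^ h) ha
  have hdistA : ∀ c ∈ A, c ≠ 0 → p ^ h + 1 - 2 * z ≤ hammingNorm c :=
    fun c hc hc0 => lrcCode_dist hγ (by omega) hc hc0
  have hdistA' : ∀ c ∈ A', c ≠ 0 → p ^ h + 1 - 2 * a ≤ hammingNorm c :=
    fun c hc hc0 => lrcCode_dist hγ (by omega) hc hc0
  -- the coupled code
  let sumL : (Fin (n'' + 2) → A) →ₗ[K] (Fin (p ^ h + 1) → K) :=
    ∑ b : Fin (n'' + 2), (A.subtype.comp (LinearMap.proj b))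
  have hsumL : ∀ f, sumL f = ∑ b : Fin (n'' + 2), (f b : Fin (p ^ h + 1) → K) := by
    intro f
    simp [sumL]
  let T : (Fin (n'' + 2) → A) →ₗ[K] ((Fin (p ^ h + 1) → K) ⧸ A') := A'.mkQ.comp sumL
  have hTapp : ∀ f, T f =
      Submodule.Quotient.mk (∑ b : Fin (n'' + 2), (f b : Fin (p ^ h + 1) → K)) := by
    intro f
    rw [LinearMap.comp_apply, hsumL f, Submodule.mkQ_apply]
  have hrangeT : LinearMap.range T = A.map A'.mkQ := by
    apply le_antisymm
    · rintro x ⟨f, rfl⟩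
      exact ⟨∑ b, (f b : Fin (p ^ h + 1) → K), A.sum_mem fun b _ => (f b).2,
        by rw [Submodule.mkQ_apply, ← hTapp f]⟩
    · rintro x ⟨y, hy, rfl⟩
      refine ⟨Pi.single 0 ⟨y, hy⟩, ?_⟩
      rw [hTapp, Submodule.mkQ_apply]
      congr 1
      rw [Finset.sum_eq_single 0]
      · simp
      · intro b _ hb
        rw [Pi.single_eq_of_ne hb]
        rfl
      · intro hb
        exact absurd (Finset.mem_univ _) hb
  have e2 : Module.finrank K (A.map A'.mkQ) + (2 * a + 1) = 2 * z + 1 := by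
    have h1 := LinearMap.finrank_range_add_finrank_ker (A'.mkQ.comp A.subtype)
    have hce : Module.finrank K (Submodule.comap A.subtype A') = Module.finrank K A' :=
      (Submodule.comapSubtypeEquivOfLe hA'A).finrank_eq
    rw [LinearMap.range_comp, Submodule.range_subtype, LinearMap.ker_comp,
      Submodule.ker_mkQ, hce, hfinA', hfinA] at h1
    exact h1
  have e1 : Module.finrank K (A.map A'.mkQ) + Module.finrank K (LinearMap.ker T)
      = (n'' + 2) * (2 * z + 1) := by
    have h1 := LinearMap.finrank_range_add_finrank_ker T
    rw [hrangeT, Module.finrank_pi_fintype K] at h1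
    simpa [hfinA, Finset.sum_const, Finset.card_univ, mul_comm] using h1
  let ι0 : (LinearMap.ker T) →ₗ[K] (Fin (p ^ h + 1) × Fin (n'' + 2) → K) :=
    { toFun := fun f => fun ib => ((f : Fin (n'' + 2) → A) ib.2 : Fin (p ^ h + 1) → K) ib.1
      map_add' := fun f g => rfl
      map_smul' := fun r f => rfl }
  have hι0inj : Function.Injective ι0 := by
    intro f g hfg
    apply Subtype.ext
    funext b
    apply Subtype.ext
    funext i
    exact congrFun hfg (i, b)
  let E : (Fin (p ^ h + 1) × Fin (n'' + 2) → K) ≃ₗ[K] (Fin ((p ^ h + 1) * (n'' + 2)) → K) :=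
    LinearEquiv.funCongrLeft K K finProdFinEquiv.symm
  refine ⟨(LinearMap.range ι0).map (E : _ →ₗ[K] _), ?_, ?_, ?_, ?_⟩
  · -- dimension
    rw [LinearEquiv.finrank_map_eq E (LinearMap.range ι0),
      LinearMap.finrank_range_of_inj hι0inj]
    have hM : (n'' + 2) * (2 * z + 1) = (n'' + 1) * (2 * z + 1) + (2 * z + 1) := by ring
    have hg2 : (n'' + 2 - 1) * (2 * z + 1) = (n'' + 1) * (2 * z + 1) := by norm_num
    rw [hg2]
    omega
  · -- minimum distance
    have hCmem : ∀ c ∈ (LinearMap.range ι0).map (E : _ →ₗ[K] _),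
        ∃ f : LinearMap.ker T, c = E (ι0 f) := by
      rintro c ⟨x, ⟨f, rfl⟩, rfl⟩
      exact ⟨f, rfl⟩
    have hnormE : ∀ x : Fin (p ^ h + 1) × Fin (n'' + 2) → K,
        hammingNorm (E x) = hammingNorm x :=
      fun x => hammingNorm_comp_equiv finProdFinEquiv.symm x
    have hnormsum : ∀ f : LinearMap.ker T, hammingNorm (ι0 f) =
        ∑ b : Fin (n'' + 2),
          hammingNorm (((f : Fin (n'' + 2) → A) b : Fin (p ^ h + 1) → K)) := by
      intro f
      rw [hammingNorm_prod]
      rfl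
    have hsumA' : ∀ f : LinearMap.ker T,
        (∑ b, ((f : Fin (n'' + 2) → A) b : Fin (p ^ h + 1) → K)) ∈ A' := by
      intro f
      have hf := f.2
      rw [LinearMap.mem_ker, hTapp] at hf
      exact (Submodule.Quotient.mk_eq_zero A').mp hf
    have hlow : ∀ c : Fin ((p ^ h + 1) * (n'' + 2)) → K,
        c ∈ (LinearMap.range ι0).map (E : _ →ₗ[K] _) → c ≠ 0 →
        p ^ h + 1 - 2 * a ≤ hammingNorm c := by
      intro c hc hc0
      obtain ⟨f, rfl⟩ := hCmem c hc
      rw [hnormE, hnormsum]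
      set g : Fin (n'' + 2) → A := (f : Fin (n'' + 2) → A) with hgdef
      set B : Finset (Fin (n'' + 2)) :=
        Finset.univ.filter fun b => (g b : Fin (p ^ h + 1) → K) ≠ 0 with hB
      have hBne : B.Nonempty := by
        by_contra hB0
        rw [Finset.not_nonempty_iff_eq_empty] at hB0
        apply hc0
        have hzz : ι0 f = 0 := by
          funext ib
          have hb : ib.2 ∉ B := by rw [hB0]; exact Finset.notMem_empty _
          have hgz : (g ib.2 : Fin (p ^ h + 1) → K) = 0 := by
            by_contra hne
            exact hb (Finset.mem_filter.mpr ⟨Finset.mem_univ _, hne⟩)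
          show (g ib.2 : Fin (p ^ h + 1) → K) ib.1 = 0
          rw [hgz]
          rfl
        rw [hzz]
        exact map_zero E
      rcases Nat.lt_or_ge B.card 2 with hcard | hcard
      · have hcard1 : B.card = 1 := by
          have := Finset.card_pos.mpr hBne
          omega
        obtain ⟨b₀, hb₀⟩ := Finset.card_eq_one.mp hcard1
        have hmem0 : b₀ ∈ B := by rw [hb₀]; exact Finset.mem_singleton_self b₀
        have hzero : ∀ b, b ≠ b₀ → (g b : Fin (p ^ h + 1) → K) = 0 := by
          intro b hb
          by_contra hne
          have hbB : b ∈ B := Finset.mem_filter.mpr ⟨Finset.mem_univ _, hne⟩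
          rw [hb₀, Finset.mem_singleton] at hbB
          exact hb hbB
        have hsum0 : (∑ b, (g b : Fin (p ^ h + 1) → K)) = (g b₀ : Fin (p ^ h + 1) → K) := by
          rw [Finset.sum_eq_single b₀]
          · intro b _ hb
            exact hzero b hb
          · intro hb
            exact absurd (Finset.mem_univ _) hb
        have hgb₀A' : (g b₀ : Fin (p ^ h + 1) → K) ∈ A' := by
          rw [← hsum0]
          exact hsumA' f
        have hgb₀0 : (g b₀ : Fin (p ^ h + 1) → K) ≠ 0 := (Finset.mem_filter.mp hmem0).2
        calc p ^ h + 1 - 2 * a ≤ hammingNorm ((g b₀ : Fin (p ^ h + 1) → K)) :=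
              hdistA' _ hgb₀A' hgb₀0
          _ ≤ ∑ b, hammingNorm ((g b : Fin (p ^ h + 1) → K)) :=
              Finset.single_le_sum (f := fun b => hammingNorm ((g b : Fin (p ^ h + 1) → K)))
                (fun _ _ => Nat.zero_le _) (Finset.mem_univ b₀)
      · obtain ⟨b₁, hb₁, b₂, hb₂, hbne⟩ := Finset.one_lt_card.mp hcard
        have h1 := hdistA _ (g b₁).2 (Finset.mem_filter.mp hb₁).2
        have h2 := hdistA _ (g b₂).2 (Finset.mem_filter.mp hb₂).2
        have hpair : hammingNorm ((g b₁ : Fin (p ^ h + 1) → K)) +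
            hammingNorm ((g b₂ : Fin (p ^ h + 1) → K))
            ≤ ∑ b, hammingNorm ((g b : Fin (p ^ h + 1) → K)) := by
          have hss := Finset.sum_le_sum_of_subset
            (f := fun b => hammingNorm ((g b : Fin (p ^ h + 1) → K)))
            (Finset.subset_univ ({b₁, b₂} : Finset (Fin (n'' + 2))))
          rwa [Finset.sum_pair hbne] at hss
        omega
    constructor
    · exact hlow
    · -- minimum weight word
      have hfr : 2 * a + 1 ≤ Module.finrank K A' := by omega
      obtain ⟨w', hw'A', hw'0, hw'wt⟩ := exists_low_weight A' (k := 2 * a)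
        (by omega) (by omega)
      set fs : Fin (n'' + 2) → A := Pi.single 0 ⟨w', hA'A hw'A'⟩ with hfs
      have hzero : ∀ b : Fin (n'' + 2), b ≠ 0 → (fs b : Fin (p ^ h + 1) → K) = 0 := by
        intro b hb
        rw [hfs, Pi.single_eq_of_ne hb]
        rfl
      have hsumfs : (∑ b, (fs b : Fin (p ^ h + 1) → K)) = w' := by
        rw [Finset.sum_eq_single 0]
        · rw [hfs, Pi.single_eq_same]
        · intro b _ hb
          exact hzero b hb
        · intro hb
          exact absurd (Finset.mem_univ _) hb
      have hfk : fs ∈ LinearMap.ker T := by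
        rw [LinearMap.mem_ker, hTapp, hsumfs]
        exact (Submodule.Quotient.mk_eq_zero A').mpr hw'A'
      set fk : LinearMap.ker T := ⟨fs, hfk⟩ with hfk'
      have hcmem : E (ι0 fk) ∈ (LinearMap.range ι0).map (E : _ →ₗ[K] _) :=
        ⟨ι0 fk, ⟨fk, rfl⟩, rfl⟩
      have hnorm : hammingNorm (E (ι0 fk)) = hammingNorm w' := by
        rw [hnormE, hnormsum]
        rw [Finset.sum_eq_single 0]
        · show hammingNorm ((fs 0 : Fin (p ^ h + 1) → K)) = _
          rw [hfs, Pi.single_eq_same]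
        · intro b _ hb
          show hammingNorm ((fs b : Fin (p ^ h + 1) → K)) = 0
          rw [hzero b hb]
          exact hammingNorm_zero
        · intro hb
          exact absurd (Finset.mem_univ _) hb
      have hcne : E (ι0 fk) ≠ 0 := by
        intro hc0
        apply hw'0
        have : hammingNorm (E (ι0 fk)) = 0 := by rw [hc0]; exact hammingNorm_zero
        rw [hnorm] at this
        exact hammingNorm_eq_zero.mp this
      refine ⟨E (ι0 fk), hcmem, hcne, ?_⟩
      have hge := hlow _ hcmem hcne
      omega
  · -- LRC property
    have hCmem : ∀ c ∈ (LinearMap.range ι0).map (E : _ →ₗ[K] _),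
        ∃ f : LinearMap.ker T, c = E (ι0 f) := by
      rintro c ⟨x, ⟨f, rfl⟩, rfl⟩
      exact ⟨f, rfl⟩
    intro i
    set b : Fin (n'' + 2) := (finProdFinEquiv.symm i).2 with hbdef
    have hembinj : Function.Injective (fun i' : Fin (p ^ h + 1) => finProdFinEquiv (i', b)) := by
      intro x y hxy
      have hpe := finProdFinEquiv.injective hxy
      exact (Prod.mk.injEq _ _ _ _).mp hpe |>.1
    set emb : Fin (p ^ h + 1) ↪ Fin ((p ^ h + 1) * (n'' + 2)) :=
      ⟨fun i' => finProdFinEquiv (i', b), hembinj⟩ with hembdef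
    refine ⟨Finset.univ.map emb, ?_, ?_, ?_⟩
    · rw [Finset.mem_map]
      refine ⟨(finProdFinEquiv.symm i).1, Finset.mem_univ _, ?_⟩
      show finProdFinEquiv ((finProdFinEquiv.symm i).1, b) = i
      rw [hbdef]
      rw [Prod.mk.eta]
      exact finProdFinEquiv.apply_symm_apply i
    · rw [Finset.card_map, Finset.card_univ, Fintype.card_fin]
      omega
    · rintro c hc hex
      obtain ⟨f, rfl⟩ := hCmem c hc
      have hcol : ∀ i', (E (ι0 f)) (emb i')
          = ((f : Fin (n'' + 2) → A) b : Fin (p ^ h + 1) → K) i' := by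
        intro i'
        show (ι0 f) (finProdFinEquiv.symm (finProdFinEquiv (i', b))) = _
        rw [Equiv.symm_apply_apply]
        rfl
      have hgb0 : ((f : Fin (n'' + 2) → A) b : Fin (p ^ h + 1) → K) ≠ 0 := by
        obtain ⟨j, hjR, hj0⟩ := hex
        obtain ⟨i', -, rfl⟩ := Finset.mem_map.mp hjR
        intro hz
        apply hj0
        show (E (ι0 f)) (emb i') = 0
        rw [hcol i', hz]
        rfl
      have hd := hdistA _ ((f : Fin (n'' + 2) → A) b).2 hgb0
      have hfilter : ((Finset.univ.map emb).filter fun j => (E (ι0 f)) j ≠ 0).card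
          = hammingNorm (((f : Fin (n'' + 2) → A) b : Fin (p ^ h + 1) → K)) := by
        rw [Finset.filter_map, Finset.card_map, hammingNorm_eq_card_filter]
        congr 1
        apply Finset.filter_congr
        intro i' _
        simp only [Function.comp_apply]
        rw [hcol i']
      rw [hfilter]
      omega
  · -- the optimality equation
    obtain ⟨w1, rfl⟩ : ∃ w1, z = a + w1 := ⟨z - a, by omega⟩
    obtain ⟨w2, hw2⟩ : ∃ w2, p ^ h = 2 * (a + w1) + 2 + w2 := ⟨p ^ h - (2 * (a + w1) + 2), by omega⟩
    have hkval : (n'' + 2 - 1) * (2 * (a + w1) + 1) + 2 * a + 1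
        = (n'' + 1) * (2 * (a + w1) + 1) + 2 * a + 1 := by norm_num
    rw [hkval]
    have hdiv1 : (n'' + 1) * (2 * (a + w1) + 1) + 2 * a + 1 + (2 * (a + w1) + 1) - 1
        = 2 * a + (2 * (a + w1) + 1) * (n'' + 2) := by
      have hrg : (n'' + 1) * (2 * (a + w1) + 1) + (2 * (a + w1) + 1)
          = (2 * (a + w1) + 1) * (n'' + 2) := by ring
      omega
    rw [hdiv1, Nat.add_mul_div_left _ _ (by omega : 0 < 2 * (a + w1) + 1),
      Nat.div_eq_of_lt (by omega : 2 * a < 2 * (a + w1) + 1)]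
    have h1 : p ^ h + 1 - 2 * a = 2 * w1 + 3 + w2 := by omega
    have h2 : p ^ h - 2 * (a + w1) + 1 - 1 = 2 + w2 := by omega
    have h3 : p ^ h + 1 = 2 * (a + w1) + 3 + w2 := by omega
    rw [h1, h2, h3]
    have h4 : 0 + (n'' + 2) - 1 = n'' + 1 := by omega
    rw [h4]
    ring
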